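/- Fix a real number R and a real ρ ≤ 1. Then min over pairs (T,V) with D(T∘V‖T×Q) ≥ R of { D(T∘V‖Q∘P) + D(T∘V‖T×Q) − R } is at least min over all pairs (T,V) of { D(T∘V‖Q∘P) + ρ·( D(T∘V‖T×Q) − R ) }. In the case of equality, every minimizer of the left-hand side also minimizes the right-hand side and satisfies D(T∘V‖T×Q) = R when ρ < 1 (respectively D(T∘V‖T×Q) ≥ R when ρ = 1). Conversely, if the right-hand minimum is attained by some pair (T_ρ,V_ρ) with D(T_ρ∘V_ρ‖T_ρ×Q) = R (respectively D(T_ρ∘V_ρ‖T_ρ×Q) ≥ R when ρ = 1), then (T_ρ,V_ρ) also attains the left-hand minimum and equality holds. -/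

import Mathlib

open scoped BigOperators
open Filter Topology

/-- `f` is a probability mass function on a finite alphabet. -/
def IsPMF {α : Type*} [Fintype α] (f : α → ℝ) : Prop :=
  (∀ a, 0 ≤ f a) ∧ ∑ a, f a = 1

/-- `P` is a discrete memoryless channel from `𝓧` to `𝓨`. -/
def IsChannel {𝓧 𝓨 : Type*} [Fintype 𝓧] [Fintype 𝓨] (P : 𝓧 → 𝓨 → ℝ) : Prop :=
  ∀ x, IsPMF (P x)

/-- `V` is a conditional pmf on `𝓧` given `𝓨`. -/
def IsCondPMF {𝓧 𝓨 : Type*} [Fintype 𝓧] [Fintype 𝓨] (V : 𝓨 → 𝓧 → ℝ) : Prop :=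
  ∀ y, IsPMF (V y)

/-- one term `s·log(s/t)` of a KL divergence, with the conventions
    `0·log(0/t) = 0` and `s·log(s/0) = +∞` for `s > 0`. -/
noncomputable def klTerm (s t : ℝ) : EReal :=
  if s = 0 then 0 else if t = 0 then ⊤ else ((s * Real.log (s / t) : ℝ) : EReal)

/-- `D(T∘V ‖ Q∘P)`. -/
noncomputable def DQP {𝓧 𝓨 : Type*} [Fintype 𝓧] [Fintype 𝓨]
    (T : 𝓨 → ℝ) (V : 𝓨 → 𝓧 → ℝ) (Q : 𝓧 → ℝ) (P : 𝓧 → 𝓨 → ℝ) : EReal :=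
  ∑ y, ∑ x, klTerm (T y * V y x) (Q x * P x y)

/-- `D(T∘V ‖ T×Q)`. -/
noncomputable def DTQ {𝓧 𝓨 : Type*} [Fintype 𝓧] [Fintype 𝓨]
    (T : 𝓨 → ℝ) (V : 𝓨 → 𝓧 → ℝ) (Q : 𝓧 → ℝ) : EReal :=
  ∑ y, ∑ x, klTerm (T y * V y x) (T y * Q x)

/-- Gallager's function `E₀(ρ,Q)` (for `ρ > −1`). -/
noncomputable def E0 {𝓧 𝓨 : Type*} [Fintype 𝓧] [Fintype 𝓨]
    (ρ : ℝ) (Q : 𝓧 → ℝ) (P : 𝓧 → 𝓨 → ℝ) : ℝ :=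
  - Real.log (∑ y, (∑ x, Q x * P x y ^ (1 / (1 + ρ))) ^ (1 + ρ))

/-- The joint distribution `T_ρ∘V_ρ` on `𝓧 × 𝓨` (for `ρ > −1`). -/
noncomputable def Jrho {𝓧 𝓨 : Type*} [Fintype 𝓧] [Fintype 𝓨]
    (ρ : ℝ) (Q : 𝓧 → ℝ) (P : 𝓧 → 𝓨 → ℝ) (x : 𝓧) (y : 𝓨) : ℝ :=
  Q x * P x y ^ (1 / (1 + ρ)) * (∑ a, Q a * P a y ^ (1 / (1 + ρ))) ^ ρ /
    ∑ y', (∑ a, Q a * P a y' ^ (1 / (1 + ρ))) ^ (1 + ρ)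

/-- `max_{x : Q(x) > 0} P(y|x)`. -/
noncomputable def maxP {𝓧 𝓨 : Type*} (Q : 𝓧 → ℝ) (P : 𝓧 → 𝓨 → ℝ) (y : 𝓨) : ℝ :=
  ⨆ x : {x // 0 < Q x}, P x.1 y

/-- `E₀(−1,Q) = −log ∑_y max_{x : Q(x)>0} P(y|x)`. -/
noncomputable def E0m1 {𝓧 𝓨 : Type*} [Fintype 𝓧] [Fintype 𝓨]
    (Q : 𝓧 → ℝ) (P : 𝓧 → 𝓨 → ℝ) : ℝ :=
  - Real.log (∑ y, maxP Q P y)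

/-- `E₀(ρ,Q)` extended to `ρ = −1`. -/
noncomputable def E0full {𝓧 𝓨 : Type*} [Fintype 𝓧] [Fintype 𝓨]
    (ρ : ℝ) (Q : 𝓧 → ℝ) (P : 𝓧 → 𝓨 → ℝ) : ℝ :=
  if ρ = -1 then E0m1 Q P else E0 ρ Q P

/-- `T_{−1}(y) ∝ max_{a : Q(a)>0} P(y|a)`. -/
noncomputable def Tm1 {𝓧 𝓨 : Type*} [Fintype 𝓧] [Fintype 𝓨]
    (Q : 𝓧 → ℝ) (P : 𝓧 → 𝓨 → ℝ) (y : 𝓨) : ℝ :=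
  maxP Q P y / ∑ y', maxP Q P y'

/-- `V` is admissible at `ρ = −1`: `V(x|y) = 0` for every `x` outside
    `argmax_{a : Q(a)>0} P(y|a)`. -/
def AdmissibleAtM1 {𝓧 𝓨 : Type*} [Fintype 𝓧] [Fintype 𝓨]
    (Q : 𝓧 → ℝ) (P : 𝓧 → 𝓨 → ℝ) (V : 𝓨 → 𝓧 → ℝ) : Prop :=
  ∀ y x, ¬ (0 < Q x ∧ ∀ a, 0 < Q a → P a y ≤ P x y) → V y x = 0

/-- the error exponent `E_e(R,Q)`. -/
noncomputable def Ee {𝓧 𝓨 : Type*} [Fintype 𝓧] [Fintype 𝓨]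
    (R : ℝ) (Q : 𝓧 → ℝ) (P : 𝓧 → 𝓨 → ℝ) : EReal :=
  sInf {v | ∃ T : 𝓨 → ℝ, ∃ V : 𝓨 → 𝓧 → ℝ, IsPMF T ∧ IsCondPMF V ∧
    v = DQP T V Q P + max (DTQ T V Q - (R : EReal)) 0}

/-- the ML correct-decoding exponent `E_c^{ML}(R,Q)`. -/
noncomputable def EcML {𝓧 𝓨 : Type*} [Fintype 𝓧] [Fintype 𝓨]
    (R : ℝ) (Q : 𝓧 → ℝ) (P : 𝓧 → 𝓨 → ℝ) : EReal :=
  sInf {v | ∃ T : 𝓨 → ℝ, ∃ V : 𝓨 → 𝓧 → ℝ, IsPMF T ∧ IsCondPMF V ∧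
    v = DQP T V Q P + max ((R : EReal) - DTQ T V Q) 0}

/-- the strict correct-decoding exponent `E_c(R,Q)` (`+∞` if infeasible). -/
noncomputable def Ec {𝓧 𝓨 : Type*} [Fintype 𝓧] [Fintype 𝓨]
    (R : ℝ) (Q : 𝓧 → ℝ) (P : 𝓧 → 𝓨 → ℝ) : EReal :=
  sInf {v | ∃ T : 𝓨 → ℝ, ∃ V : 𝓨 → 𝓧 → ℝ, IsPMF T ∧ IsCondPMF V ∧
    (R : EReal) ≤ DTQ T V Q ∧ v = DQP T V Q P}

/-- the mutual information `I(Q∘P)`. -/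
noncomputable def MI {𝓧 𝓨 : Type*} [Fintype 𝓧] [Fintype 𝓨]
    (Q : 𝓧 → ℝ) (P : 𝓧 → 𝓨 → ℝ) : ℝ :=
  ∑ x, ∑ y, if Q x * P x y = 0 then 0
    else Q x * P x y * Real.log (P x y / ∑ a, Q a * P a y)

/-- the capacity `C(Z)` of the channel restricted to input letters in `Z`. -/
noncomputable def capacity {𝓧 𝓨 : Type*} [Fintype 𝓧] [Fintype 𝓨]
    (P : 𝓧 → 𝓨 → ℝ) (Z : Set 𝓧) : ℝ :=
  sSup {c | ∃ Q' : 𝓧 → ℝ, IsPMF Q' ∧ (∀ x, 0 < Q' x → x ∈ Z) ∧ c = MI Q' P}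

/-- `R_{−1}^{−}(Q)`. -/
noncomputable def Rm1minus {𝓧 𝓨 : Type*} [Fintype 𝓧] [Fintype 𝓨]
    (Q : 𝓧 → ℝ) (P : 𝓧 → 𝓨 → ℝ) : EReal :=
  sInf {v | ∃ V : 𝓨 → 𝓧 → ℝ, IsCondPMF V ∧ AdmissibleAtM1 Q P V ∧
    v = DTQ (Tm1 Q P) V Q}

/-- `R_{−1}^{+}(Q)`. -/
noncomputable def Rm1plus {𝓧 𝓨 : Type*} [Fintype 𝓧] [Fintype 𝓨]
    (Q : 𝓧 → ℝ) (P : 𝓧 → 𝓨 → ℝ) : EReal :=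
  sSup {v | ∃ V : 𝓨 → 𝓧 → ℝ, IsCondPMF V ∧ AdmissibleAtM1 Q P V ∧
    v = DTQ (Tm1 Q P) V Q}

/-- `F_ρ(T∘V, Q) = D(T∘V‖Q∘P) + ρ·D(T∘V‖T×Q)`. -/
noncomputable def Frho {𝓧 𝓨 : Type*} [Fintype 𝓧] [Fintype 𝓨]
    (ρ : ℝ) (T : 𝓨 → ℝ) (V : 𝓨 → 𝓧 → ℝ) (Q : 𝓧 → ℝ) (P : 𝓧 → 𝓨 → ℝ) : EReal :=
  DQP T V Q P + (ρ : EReal) * DTQ T V Q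

/-- the unconstrained penalized minimum
    `min_{T,V} { D(T∘V‖Q∘P) + ρ·(D(T∘V‖T×Q) − R) }`. -/
noncomputable def penMin {𝓧 𝓨 : Type*} [Fintype 𝓧] [Fintype 𝓨]
    (Q : 𝓧 → ℝ) (P : 𝓧 → 𝓨 → ℝ) (R ρ : ℝ) : EReal :=
  sInf {v | ∃ T : 𝓨 → ℝ, ∃ V : 𝓨 → 𝓧 → ℝ, IsPMF T ∧ IsCondPMF V ∧
    v = DQP T V Q P + (ρ : EReal) * (DTQ T V Q - (R : EReal))}

/-- the support-constrained penalized minimum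
    `min_{T,V : supp(V) ⊆ supp(Q)} { D(T∘V‖Q∘P) − ρ·(R − D(T∘V‖T×Q)) }`. -/
noncomputable def penMinS {𝓧 𝓨 : Type*} [Fintype 𝓧] [Fintype 𝓨]
    (Q : 𝓧 → ℝ) (P : 𝓧 → 𝓨 → ℝ) (R ρ : ℝ) : EReal :=
  sInf {v | ∃ T : 𝓨 → ℝ, ∃ V : 𝓨 → 𝓧 → ℝ, IsPMF T ∧ IsCondPMF V ∧
    (∀ y x, Q x = 0 → V y x = 0) ∧
    v = DQP T V Q P - (ρ : EReal) * ((R : EReal) - DTQ T V Q)}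

/-- the constrained minimum
    `min_{T,V : D(T∘V‖T×Q) ≥ R} { D(T∘V‖Q∘P) + D(T∘V‖T×Q) − R }`. -/
noncomputable def cMinGe {𝓧 𝓨 : Type*} [Fintype 𝓧] [Fintype 𝓨]
    (Q : 𝓧 → ℝ) (P : 𝓧 → 𝓨 → ℝ) (R : ℝ) : EReal :=
  sInf {v | ∃ T : 𝓨 → ℝ, ∃ V : 𝓨 → 𝓧 → ℝ, IsPMF T ∧ IsCondPMF V ∧
    (R : EReal) ≤ DTQ T V Q ∧ v = DQP T V Q P + DTQ T V Q - (R : EReal)}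


section Aux

open scoped BigOperators

lemma klTerm_ne_bot (s t : ℝ) : klTerm s t ≠ ⊥ := by
  unfold klTerm; split_ifs
  · simp
  · simp
  · exact EReal.coe_ne_bot _

lemma klTerm_zero_left (t : ℝ) : klTerm 0 t = 0 := if_pos rfl

lemma klTerm_self (s : ℝ) : klTerm s s = 0 := by
  unfold klTerm; split_ifs with h1
  · rfl
  · rw [div_self h1, Real.log_one, mul_zero]; rfl

lemma klTerm_ne_top {s t : ℝ} (h : s ≠ 0 → t ≠ 0) : klTerm s t ≠ ⊤ := by
  unfold klTerm; split_ifs with h1 h2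
  · simp
  · exact absurd h2 (h h1)
  · exact EReal.coe_ne_top _

lemma sum_ne_bot' {ι : Type*} (s : Finset ι) (f : ι → EReal)
    (h : ∀ i ∈ s, f i ≠ ⊥) : ∑ i ∈ s, f i ≠ ⊥ := by
  induction s using Finset.cons_induction with
  | empty => simp
  | cons a s ha ih =>
    rw [Finset.sum_cons, Ne, EReal.add_eq_bot_iff]
    push_neg
    exact ⟨h a (Finset.mem_cons_self a s), ih fun i hi => h i (Finset.mem_cons_of_mem hi)⟩

lemma sum_ne_top' {ι : Type*} (s : Finset ι) (f : ι → EReal)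
    (h : ∀ i ∈ s, f i ≠ ⊤) : ∑ i ∈ s, f i ≠ ⊤ := by
  induction s using Finset.cons_induction with
  | empty => simp
  | cons a s ha ih =>
    rw [Finset.sum_cons]
    exact (EReal.add_lt_top (h a (Finset.mem_cons_self a s))
      (ih fun i hi => h i (Finset.mem_cons_of_mem hi))).ne

lemma DQP_ne_bot {𝓧 𝓨 : Type*} [Fintype 𝓧] [Fintype 𝓨]
    (T : 𝓨 → ℝ) (V : 𝓨 → 𝓧 → ℝ) (Q : 𝓧 → ℝ) (P : 𝓧 → 𝓨 → ℝ) :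
    DQP T V Q P ≠ ⊥ :=
  sum_ne_bot' _ _ fun _ _ => sum_ne_bot' _ _ fun _ _ => klTerm_ne_bot _ _

lemma DTQ_ne_bot {𝓧 𝓨 : Type*} [Fintype 𝓧] [Fintype 𝓨]
    (T : 𝓨 → ℝ) (V : 𝓨 → 𝓧 → ℝ) (Q : 𝓧 → ℝ) :
    DTQ T V Q ≠ ⊥ :=
  sum_ne_bot' _ _ fun _ _ => sum_ne_bot' _ _ fun _ _ => klTerm_ne_bot _ _

lemma key_le {A D : EReal} (hA : A ≠ ⊥) (hD : D ≠ ⊥) {R ρ : ℝ} (hρ : ρ ≤ 1)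
    (hR : (R : EReal) ≤ D) :
    A + (ρ : EReal) * (D - (R : EReal)) ≤ A + D - (R : EReal) := by
  have hsub : A + D - (R:EReal) = A + (D - (R:EReal)) := by
    rw [sub_eq_add_neg (A + D), sub_eq_add_neg D, add_assoc]
  rw [hsub]
  rcases eq_or_ne D ⊤ with hT | hT
  · rw [hT, EReal.top_sub_coe]
    exact add_le_add_right le_top A
  · lift D to ℝ using ⟨hT, hD⟩ with d
    have hRd : R ≤ d := by exact_mod_cast hR
    have h1 : (d:EReal) - (R:EReal) = ((d - R : ℝ) : EReal) := by norm_cast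
    rw [h1]
    have h2 : (ρ:EReal) * ((d - R : ℝ):EReal) = ((ρ * (d-R) : ℝ):EReal) := by norm_cast
    rw [h2]
    exact add_le_add_right (by exact_mod_cast mul_le_of_le_one_left (by linarith) hρ) A

lemma penMin_lt_top {𝓧 𝓨 : Type*} [Fintype 𝓧] [Fintype 𝓨] [Nonempty 𝓧] [Nonempty 𝓨]
    (P : 𝓧 → 𝓨 → ℝ) (hP : IsChannel P) (Q : 𝓧 → ℝ) (hQ : IsPMF Q) (R ρ : ℝ) :
    penMin Q P R ρ < ⊤ := by
  classical
  set Ts : 𝓨 → ℝ := fun y => ∑ x, Q x * P x y with hTs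
  set Vs : 𝓨 → 𝓧 → ℝ := fun y x => if Ts y = 0 then Q x else Q x * P x y / Ts y with hVs
  have hTsnn : ∀ y, 0 ≤ Ts y := fun y =>
    Finset.sum_nonneg fun x _ => mul_nonneg (hQ.1 x) ((hP x).1 y)
  have hT : IsPMF Ts := by
    constructor
    · exact hTsnn
    · rw [hTs]
      rw [Finset.sum_comm]
      have : ∀ x, ∑ y, Q x * P x y = Q x := by
        intro x
        rw [← Finset.mul_sum, (hP x).2, mul_one]
      simp only [this]
      exact hQ.2
  have hV : IsCondPMF Vs := by
    intro y
    by_cases hy : Ts y = 0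
    · constructor
      · intro x; simp only [hVs, if_pos hy]; exact hQ.1 x
      · simp only [hVs, if_pos hy]; exact hQ.2
    · constructor
      · intro x
        simp only [hVs, if_neg hy]
        exact div_nonneg (mul_nonneg (hQ.1 x) ((hP x).1 y)) (hTsnn y)
      · simp only [hVs, if_neg hy]
        rw [← Finset.sum_div]
        exact div_self hy
  have hDQP : DQP Ts Vs Q P = 0 := by
    unfold DQP
    rw [Finset.sum_eq_zero]
    intro y _
    rw [Finset.sum_eq_zero]
    intro x _
    by_cases hy : Ts y = 0
    · rw [hy, zero_mul, klTerm_zero_left]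
    · have : Ts y * Vs y x = Q x * P x y := by
        simp only [hVs, if_neg hy]
        field_simp
      rw [this, klTerm_self]
  have hDTQ_top : DTQ Ts Vs Q ≠ ⊤ := by
    apply sum_ne_top'
    intro y _
    apply sum_ne_top'
    intro x _
    apply klTerm_ne_top
    intro hs
    have hy : Ts y ≠ 0 := fun h => hs (by rw [h, zero_mul])
    have hQx : Q x ≠ 0 := by
      intro h
      apply hs
      simp only [hVs, if_neg hy, h, zero_mul, zero_div, mul_zero]
    exact mul_ne_zero hy hQx
  have hDTQ_bot : DTQ Ts Vs Q ≠ ⊥ := DTQ_ne_bot _ _ _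
  obtain ⟨d, hd⟩ : ∃ d : ℝ, DTQ Ts Vs Q = (d : EReal) := by
    lift DTQ Ts Vs Q to ℝ using ⟨hDTQ_top, hDTQ_bot⟩ with d
    exact ⟨d, rfl⟩
  have hmem : (0 : EReal) + (ρ : EReal) * (((d : EReal)) - (R : EReal)) ∈
      {v | ∃ T : 𝓨 → ℝ, ∃ V : 𝓨 → 𝓧 → ℝ, IsPMF T ∧ IsCondPMF V ∧
        v = DQP T V Q P + (ρ : EReal) * (DTQ T V Q - (R : EReal))} := by
    exact ⟨Ts, Vs, hT, hV, by rw [hDQP, hd]⟩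
  refine lt_of_le_of_lt (sInf_le hmem) ?_
  have : (0 : EReal) + (ρ : EReal) * (((d : EReal)) - (R : EReal))
      = ((ρ * (d - R) : ℝ) : EReal) := by
    rw [zero_add]
    norm_cast
  rw [this]
  exact EReal.coe_lt_top _

end Aux

theorem stmt_1 {𝓧 𝓨 : Type*} [Fintype 𝓧] [Fintype 𝓨] [Nonempty 𝓧] [Nonempty 𝓨]
    (P : 𝓧 → 𝓨 → ℝ) (hP : IsChannel P) (Q : 𝓧 → ℝ) (hQ : IsPMF Q)
    (R ρ : ℝ) (hρ : ρ ≤ 1) :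
    penMin Q P R ρ ≤ cMinGe Q P R
    ∧ (cMinGe Q P R = penMin Q P R ρ →
        ∀ (T : 𝓨 → ℝ) (V : 𝓨 → 𝓧 → ℝ), IsPMF T → IsCondPMF V →
          (R : EReal) ≤ DTQ T V Q →
          DQP T V Q P + DTQ T V Q - (R : EReal) = cMinGe Q P R →
          DQP T V Q P + (ρ : EReal) * (DTQ T V Q - (R : EReal)) = penMin Q P R ρ
          ∧ (ρ < 1 → DTQ T V Q = (R : EReal))
          ∧ (ρ = 1 → (R : EReal) ≤ DTQ T V Q))
    ∧ (∀ (T : 𝓨 → ℝ) (V : 𝓨 → 𝓧 → ℝ), IsPMF T → IsCondPMF V →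
        DQP T V Q P + (ρ : EReal) * (DTQ T V Q - (R : EReal)) = penMin Q P R ρ →
        (ρ < 1 → DTQ T V Q = (R : EReal)) →
        (ρ = 1 → (R : EReal) ≤ DTQ T V Q) →
        ((R : EReal) ≤ DTQ T V Q
          ∧ DQP T V Q P + DTQ T V Q - (R : EReal) = cMinGe Q P R)
        ∧ cMinGe Q P R = penMin Q P R ρ) := by
  classical
  have hpart1 : penMin Q P R ρ ≤ cMinGe Q P R := by
    apply le_sInf
    rintro v ⟨T, V, hT, hV, hRD, rfl⟩
    have hmem : DQP T V Q P + (ρ : EReal) * (DTQ T V Q - (R : EReal)) ∈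
        {v | ∃ T : 𝓨 → ℝ, ∃ V : 𝓨 → 𝓧 → ℝ, IsPMF T ∧ IsCondPMF V ∧
          v = DQP T V Q P + (ρ : EReal) * (DTQ T V Q - (R : EReal))} :=
      ⟨T, V, hT, hV, rfl⟩
    exact (sInf_le hmem).trans (key_le (DQP_ne_bot T V Q P) (DTQ_ne_bot T V Q) hρ hRD)
  refine ⟨hpart1, ?_, ?_⟩
  · -- equality case: every cMinGe minimizer minimizes penMin
    intro heq T V hT hV hRD hmin
    have hmem : DQP T V Q P + (ρ : EReal) * (DTQ T V Q - (R : EReal)) ∈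
        {v | ∃ T : 𝓨 → ℝ, ∃ V : 𝓨 → 𝓧 → ℝ, IsPMF T ∧ IsCondPMF V ∧
          v = DQP T V Q P + (ρ : EReal) * (DTQ T V Q - (R : EReal))} :=
      ⟨T, V, hT, hV, rfl⟩
    have hle1 : penMin Q P R ρ ≤ DQP T V Q P + (ρ : EReal) * (DTQ T V Q - (R : EReal)) :=
      sInf_le hmem
    have hle2 : DQP T V Q P + (ρ : EReal) * (DTQ T V Q - (R : EReal))
        ≤ DQP T V Q P + DTQ T V Q - (R : EReal) :=
      key_le (DQP_ne_bot T V Q P) (DTQ_ne_bot T V Q) hρ hRD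
    have hchain : DQP T V Q P + DTQ T V Q - (R : EReal) = penMin Q P R ρ := by
      rw [hmin, heq]
    have hattain : DQP T V Q P + (ρ : EReal) * (DTQ T V Q - (R : EReal)) = penMin Q P R ρ :=
      le_antisymm (hle2.trans_eq hchain) hle1
    refine ⟨hattain, ?_, fun _ => hRD⟩
    intro hρlt
    -- finiteness
    have hfin : DQP T V Q P + DTQ T V Q - (R : EReal) ≠ ⊤ := by
      rw [hchain]
      exact (penMin_lt_top P hP Q hQ R ρ).ne
    have hDne : DTQ T V Q ≠ ⊤ := by
      intro h
      apply hfin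
      rw [h, EReal.add_top_of_ne_bot (DQP_ne_bot T V Q P), sub_eq_add_neg,
        ← EReal.coe_neg, EReal.top_add_coe]
    have hAne : DQP T V Q P ≠ ⊤ := by
      intro h
      apply hfin
      rw [h, EReal.top_add_of_ne_bot (DTQ_ne_bot T V Q), sub_eq_add_neg,
        ← EReal.coe_neg, EReal.top_add_coe]
    obtain ⟨a, ha⟩ : ∃ a : ℝ, DQP T V Q P = (a : EReal) := by
      lift DQP T V Q P to ℝ using ⟨hAne, DQP_ne_bot T V Q P⟩ with a
      exact ⟨a, rfl⟩
    obtain ⟨d, hd⟩ : ∃ d : ℝ, DTQ T V Q = (d : EReal) := by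
      lift DTQ T V Q to ℝ using ⟨hDne, DTQ_ne_bot T V Q⟩ with d
      exact ⟨d, rfl⟩
    have heq2 : DQP T V Q P + (ρ : EReal) * (DTQ T V Q - (R : EReal))
        = DQP T V Q P + DTQ T V Q - (R : EReal) := hattain.trans hchain.symm
    rw [ha, hd] at heq2
    have heqr : a + ρ * (d - R) = a + d - R := by
      have : ((a + ρ * (d - R) : ℝ) : EReal) = ((a + d - R : ℝ) : EReal) := by
        push_cast
        convert heq2 using 2 <;> norm_cast
      exact_mod_cast this
    have h0 : (d - R) * (1 - ρ) = 0 := by linear_combination -heqr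
    rcases mul_eq_zero.1 h0 with h | h
    · rw [hd]
      have : d = R := by linarith
      exact_mod_cast congrArg (fun t : ℝ => (t : EReal)) this
    · exact absurd h (by intro h'; linarith)
  · -- converse
    intro T V hT hV hpen h1 h2
    have hRD : (R : EReal) ≤ DTQ T V Q := by
      rcases lt_or_eq_of_le hρ with hlt | heq1
      · exact le_of_eq (h1 hlt).symm
      · exact h2 heq1
    have hmul : (ρ : EReal) * (DTQ T V Q - (R : EReal)) = DTQ T V Q - (R : EReal) := by
      rcases lt_or_eq_of_le hρ with hlt | heq1
      · rw [h1 hlt]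
        have : (R : EReal) - (R : EReal) = 0 := by norm_cast; simp
        rw [this, mul_zero]
      · rw [heq1, EReal.coe_one, one_mul]
    have hpen' : DQP T V Q P + DTQ T V Q - (R : EReal) = penMin Q P R ρ := by
      rw [← hpen, hmul, sub_eq_add_neg, sub_eq_add_neg, add_assoc]
    have hmemC : DQP T V Q P + DTQ T V Q - (R : EReal) ∈
        {v | ∃ T : 𝓨 → ℝ, ∃ V : 𝓨 → 𝓧 → ℝ, IsPMF T ∧ IsCondPMF V ∧
          (R : EReal) ≤ DTQ T V Q ∧ v = DQP T V Q P + DTQ T V Q - (R : EReal)} :=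
      ⟨T, V, hT, hV, hRD, rfl⟩
    have hcle : cMinGe Q P R ≤ DQP T V Q P + DTQ T V Q - (R : EReal) := sInf_le hmemC
    have heqmin : cMinGe Q P R = penMin Q P R ρ :=
      le_antisymm (hcle.trans_eq hpen') hpart1
    exact ⟨⟨hRD, le_antisymm (hpen'.trans heqmin.symm).le hcle⟩, heqmin⟩
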